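/- For every integer n ≥ 1, the polynomial W_n(x) = ∏_{1 ≤ k < n/2, gcd(k,n)=1} (x^2 + 4 sin^2(πk/n)) (with W_1 = W_2 = 1) has integer coefficients. -/

import Mathlib

open Finset Polynomial Real

noncomputable def gZ : ℕ → Polynomial ℤ
  | 0 => 0
  | 1 => 1
  | (m+2) => X * gZ (m+1) - gZ m

lemma gZ_eval (u : ℝ) (hu : u ≠ 0) (m : ℕ) :
    ((gZ m).map (Int.castRingHom ℝ)).eval (u + u⁻¹) * (u - u⁻¹) = u^m - (u⁻¹)^m := by
  have key : u * u⁻¹ = 1 := mul_inv_cancel₀ hu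
  induction m using Nat.strong_induction_on with
  | _ m ih =>
    match m with
    | 0 => simp [gZ]
    | 1 => simp [gZ]
    | (m+2) =>
      have h1 := ih (m+1) (by omega)
      have h0 := ih m (by omega)
      simp only [gZ, Polynomial.map_sub, Polynomial.map_mul, Polynomial.map_X, eval_sub,
        eval_mul, eval_X]
      linear_combination (u + u⁻¹) * h1 - h0 + (u^m - (u⁻¹)^m) * key +
        ((u⁻¹)^(m+1) * u - u^(m+1) * u⁻¹) * key + u * u⁻¹ * (u^m - (u⁻¹)^m) * key

-- complex product of (u - ζ^k) over k ∈ Ico 1 n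
lemma prod_roots (n : ℕ) (hn : 0 < n) (u : ℂ) :
    (u - 1) * ∏ k ∈ Finset.Ico 1 n, (u - Complex.exp (2*↑π*Complex.I/n) ^ k) = u^n - 1 := by
  have hζ : IsPrimitiveRoot (Complex.exp (2*↑π*Complex.I/n)) n :=
    Complex.isPrimitiveRoot_exp n hn.ne'
  have h := X_pow_sub_C_eq_prod hζ hn (one_pow n)
  have h2 := congrArg (Polynomial.eval u) h
  simp only [eval_sub, eval_pow, eval_X, eval_C, eval_prod, mul_one] at h2
  rw [show Finset.range n = insert 0 (Finset.Ico 1 n) by ext a; simp; omega,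
    Finset.prod_insert (by simp)] at h2
  simp only [pow_zero] at h2
  symm
  simpa using h2

lemma factor_eq (n k : ℕ) (hn : 0 < n) (hk2 : 2*k < n) (x u : ℝ)
    (hu : u ≠ 0) (ht : u + u⁻¹ = x^2 + 2) :
    ((x^2 + 4 * Real.sin (π*k/n)^2 : ℝ) : ℂ) * (u:ℂ)
      = ((u:ℂ) - Complex.exp (2*↑π*Complex.I/n) ^ k)
        * ((u:ℂ) - Complex.exp (2*↑π*Complex.I/n) ^ (n-k)) := by
  set ζ : ℂ := Complex.exp (2*↑π*Complex.I/n) with hζdef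
  have hncast : (n:ℂ) ≠ 0 := Nat.cast_ne_zero.mpr hn.ne'
  set θ : ℝ := 2*π*k/n with hθdef
  have hθC : (θ:ℂ) = 2*↑π*↑k/↑n := by
    rw [hθdef]; push_cast; ring
  have hθc : (θ:ℂ) * Complex.I = (k:ℂ) * (2*↑π*Complex.I/(n:ℂ)) := by
    simp only [hθdef]; push_cast; field_simp
  have hζk : ζ^k = Complex.exp ((θ:ℂ) * Complex.I) := by
    rw [← Complex.exp_nat_mul, hθc]
  have hn2 : ((n:ℂ)) * (2*↑π*Complex.I/(n:ℂ)) = 2*↑π*Complex.I := by field_simp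
  have hζnk : ζ^(n-k) = Complex.exp (-(θ:ℂ) * Complex.I) := by
    rw [← Complex.exp_nat_mul]
    have hc : ((n-k : ℕ) : ℂ) = (n:ℂ) - k := by
      push_cast [Nat.cast_sub (by omega : k ≤ n)]; ring
    have : ((n-k:ℕ):ℂ) * (2*↑π*Complex.I/n) = 2*↑π*Complex.I + (-(θ:ℂ) * Complex.I) := by
      rw [hc]; linear_combination hn2 - hθc + 2*Complex.I*hθC
    rw [this, Complex.exp_add, Complex.exp_two_pi_mul_I, one_mul]
  have hsum : ζ^k + ζ^(n-k) = 2 * Complex.cos (θ:ℂ) := by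
    rw [hζk, hζnk, ← Complex.two_cos]
  have hprod : ζ^k * ζ^(n-k) = 1 := by
    rw [← pow_add, show k + (n-k) = n by omega]
    exact (Complex.isPrimitiveRoot_exp n hn.ne').pow_eq_one
  have htrig : 4 * Real.sin (π*k/n)^2 = 2 - 2*Real.cos θ := by
    have h1 : Real.cos θ = Real.cos (2 * (π*k/n)) := by rw [hθdef]; ring_nf
    have h2 := Real.cos_two_mul' (π*k/n)
    have h3 := Real.sin_sq_add_cos_sq (π*k/n)
    rw [h1, h2]; nlinarith
  have hx : x^2 + 4*Real.sin (π*k/n)^2 = u + u⁻¹ - 2*Real.cos θ := by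
    rw [htrig]; linarith
  have huC : (u:ℂ) ≠ 0 := by exact_mod_cast hu
  have hinv : (u:ℂ) * (u:ℂ)⁻¹ = 1 := mul_inv_cancel₀ huC
  have hcosc : ((Real.cos θ : ℝ) : ℂ) = Complex.cos (θ:ℂ) := Complex.ofReal_cos θ
  rw [hx]
  push_cast
  linear_combination (u:ℂ) * hsum - hprod + hinv

noncomputable def pV (n : ℕ) : Polynomial ℤ :=
  (if n % 2 = 0 then gZ (n/2) else gZ (n/2+1) + gZ (n/2)).comp (Polynomial.X^2 + 2)

lemma pV_eval (n : ℕ) (hn : 1 ≤ n) (x u : ℝ) (hu : 1 < u) (ht : u + u⁻¹ = x^2 + 2) :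
    (Polynomial.eval x ((pV n).map (Int.castRingHom ℝ))) * (u ^ ((n+1)/2 - 1) *
      ((u - 1) * (if n % 2 = 0 then u + 1 else 1))) = u^n - 1 := by
  have hu0 : u ≠ 0 := by positivity
  have huv : u * u⁻¹ = 1 := mul_inv_cancel₀ hu0
  have hmapeval : ∀ q : Polynomial ℤ,
      Polynomial.eval x ((q.comp (Polynomial.X^2 + 2)).map (Int.castRingHom ℝ))
        = Polynomial.eval (u + u⁻¹) (q.map (Int.castRingHom ℝ)) := by
    intro q
    rw [Polynomial.map_comp, eval_comp, ht]
    push_cast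
    simp
  by_cases hpar : n % 2 = 0
  · obtain ⟨r, hr⟩ : ∃ r, n = 2*(r+1) := ⟨n/2 - 1, by omega⟩
    have hq : n / 2 = r + 1 := by omega
    rw [pV, if_pos hpar, hmapeval, if_pos hpar, hq]
    have hB := gZ_eval u hu0 (r+1)
    have hpow : (u⁻¹)^(r+1) * u^(r+1) = 1 := by
      rw [← mul_pow, inv_mul_cancel₀ hu0, one_pow]
    have hidx : (n+1)/2 - 1 = r := by omega
    rw [hidx, hr]
    linear_combination u^(r+1) * hB
      + (Polynomial.eval (u+u⁻¹) ((gZ (r+1)).map (Int.castRingHom ℝ))) * u^r * huv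
      - hpow
  · obtain ⟨m, hm⟩ : ∃ m, n = 2*m+1 := ⟨n/2, by omega⟩
    have hq : n / 2 = m := by omega
    rw [pV, if_neg hpar, hmapeval, if_neg hpar, hq]
    have hidx : (n+1)/2 - 1 = m := by omega
    rw [hidx, hm]
    have hB1 := gZ_eval u hu0 (m+1)
    have hB0 := gZ_eval u hu0 m
    have hpow : (u⁻¹)^m * u^m = 1 := by
      rw [← mul_pow, inv_mul_cancel₀ hu0, one_pow]
    have hpow1 : (u⁻¹)^(m+1) * u^(m+1) = 1 := by
      rw [← mul_pow, inv_mul_cancel₀ hu0, one_pow]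
    have hup1 : u + 1 ≠ 0 := by positivity
    apply mul_right_cancel₀ hup1
    rw [Polynomial.map_add, eval_add]
    linear_combination u^(m+1)*hB1 + u^(m+1)*hB0
      + (Polynomial.eval (u+u⁻¹) ((gZ (m+1)).map (Int.castRingHom ℝ))
        + Polynomial.eval (u+u⁻¹) ((gZ m).map (Int.castRingHom ℝ))) * (u^m * (u+1) - u^(m+1)) * huv
      - hpow1 - u * hpow

/-- `V_n(x) = ∏_{1 ≤ k < n/2} (x^2 + 4 sin²(πk/n))`, with `V_1 = V_2 = 1`. -/
noncomputable def V (n : ℕ) : Polynomial ℝ :=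
  ∏ k ∈ (Finset.Ico 1 n).filter (fun k => 2 * k < n),
    (Polynomial.X ^ 2 + Polynomial.C (4 * Real.sin (Real.pi * k / n) ^ 2))

/-- `W_n(x) = ∏_{1 ≤ k < n/2, gcd(k,n)=1} (x^2 + 4 sin²(πk/n))`, with `W_1 = W_2 = 1`. -/
noncomputable def W (n : ℕ) : Polynomial ℝ :=
  ∏ k ∈ (Finset.Ico 1 n).filter (fun k => 2 * k < n ∧ Nat.gcd k n = 1),
    (Polynomial.X ^ 2 + Polynomial.C (4 * Real.sin (Real.pi * k / n) ^ 2))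

lemma V_eval (n : ℕ) (hn : 1 ≤ n) (x u : ℝ) (hu : 1 < u) (ht : u + u⁻¹ = x^2 + 2) :
    (Polynomial.eval x (V n)) * (u ^ ((n+1)/2 - 1) *
      ((u - 1) * (if n % 2 = 0 then u + 1 else 1))) = u^n - 1 := by
  have hn0 : 0 < n := hn
  have hu0 : u ≠ 0 := by positivity
  set c := (n+1)/2 with hc
  set m := c - 1 with hm
  set ζ : ℂ := Complex.exp (2*↑π*Complex.I/n) with hζ
  set F : ℕ → ℂ := fun k => (u:ℂ) - ζ^k with hF
  have hS : (Finset.Ico 1 n).filter (fun k => 2*k < n) = Finset.Ico 1 c := by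
    ext a; simp only [Finset.mem_filter, Finset.mem_Ico]; omega
  have hevalV : Polynomial.eval x (V n) = ∏ k ∈ Finset.Ico 1 c, (x^2 + 4*Real.sin (π*k/n)^2) := by
    rw [V, hS, eval_prod]
    refine Finset.prod_congr rfl fun k _ => ?_
    simp
  have hA : ((Polynomial.eval x (V n) : ℝ):ℂ) * (u:ℂ)^m
      = ∏ k ∈ Finset.Ico 1 c, (F k * F (n-k)) := by
    rw [hevalV]
    push_cast
    rw [show ((u:ℂ))^m = ∏ _k ∈ Finset.Ico 1 c, (u:ℂ) by
      rw [Finset.prod_const, Nat.card_Ico]]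
    rw [← Finset.prod_mul_distrib]
    refine Finset.prod_congr rfl fun k hk => ?_
    have hk' := Finset.mem_Ico.mp hk
    have h2k : 2*k < n := by omega
    have := factor_eq n k hn0 h2k x u hu0 ht
    push_cast at this ⊢
    exact this
  have hrefl : ∏ k ∈ Finset.Ico 1 c, F (n-k) = ∏ k ∈ Finset.Ioo (n/2) n, F k := by
    refine Finset.prod_bij' (fun k _ => n - k) (fun k _ => n - k) ?_ ?_ ?_ ?_ ?_
    · intro a ha; have := Finset.mem_Ico.mp ha; simp only [Finset.mem_Ioo]; omega
    · intro a ha; have := Finset.mem_Ioo.mp ha; simp only [Finset.mem_Ico]; omega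
    · intro a ha; have := Finset.mem_Ico.mp ha; show n - (n - a) = a; omega
    · intro a ha; have := Finset.mem_Ioo.mp ha; show n - (n - a) = a; omega
    · intro a ha; rfl
  have hmid : ∏ k ∈ Finset.Ico c n, F k
      = (if n % 2 = 0 then ((u:ℂ)+1) else 1) * ∏ k ∈ Finset.Ioo (n/2) n, F k := by
    by_cases hpar : n % 2 = 0
    · rw [if_pos hpar]
      have hins : Finset.Ico c n = insert (n/2) (Finset.Ioo (n/2) n) := by
        ext a
        simp only [Finset.mem_Ico, Finset.mem_insert, Finset.mem_Ioo]
        omega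
      rw [hins, Finset.prod_insert (by simp)]
      congr 1
      have hζhalf : ζ^(n/2) = -1 := by
        rw [hζ, ← Complex.exp_nat_mul]
        have h2 : ((n/2 : ℕ):ℂ) * 2 = (n:ℂ) := by
          exact_mod_cast congrArg (Nat.cast : ℕ → ℂ) (by omega : n/2 * 2 = n)
        have hnc : (n:ℂ) ≠ 0 := Nat.cast_ne_zero.mpr hn0.ne'
        have hcast : ((n/2 : ℕ):ℂ) * (2*↑π*Complex.I/n) = ↑π * Complex.I := by
          field_simp
          linear_combination h2
        rw [hcast, Complex.exp_pi_mul_I]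
      rw [hF]; simp [hζhalf]
    · rw [if_neg hpar, one_mul]
      congr 1
      ext a
      simp only [Finset.mem_Ico, Finset.mem_Ioo]
      omega
  have hsplit : (∏ k ∈ Finset.Ico 1 c, F k) * ∏ k ∈ Finset.Ico c n, F k
      = ∏ k ∈ Finset.Ico 1 n, F k :=
    Finset.prod_Ico_consecutive F (by omega) (by omega)
  have hfull : ((u:ℂ) - 1) * ∏ k ∈ Finset.Ico 1 n, F k = (u:ℂ)^n - 1 :=
    prod_roots n hn0 (u:ℂ)
  have hsplit2 : ∏ k ∈ Finset.Ico 1 c, (F k * F (n-k))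
      = (∏ k ∈ Finset.Ico 1 c, F k) * ∏ k ∈ Finset.Ico 1 c, F (n-k) :=
    Finset.prod_mul_distrib
  have key : ((Polynomial.eval x (V n) * (u ^ m * ((u - 1) * (if n % 2 = 0 then u + 1 else 1))) : ℝ) : ℂ)
      = ((u^n - 1 : ℝ) : ℂ) := by
    by_cases hpar : n % 2 = 0
    · rw [if_pos hpar] at *
      push_cast
      linear_combination (((u:ℂ)-1)*((u:ℂ)+1))*hA + (((u:ℂ)-1)*((u:ℂ)+1))*hsplit2
        + (((u:ℂ)-1)*((u:ℂ)+1)*(∏ k ∈ Finset.Ico 1 c, F k))*hrefl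
        - (((u:ℂ)-1)*(∏ k ∈ Finset.Ico 1 c, F k))*hmid
        + ((u:ℂ)-1)*hsplit + hfull
    · rw [if_neg hpar] at *
      push_cast
      linear_combination (((u:ℂ)-1))*hA + (((u:ℂ)-1))*hsplit2
        + (((u:ℂ)-1)*(∏ k ∈ Finset.Ico 1 c, F k))*hrefl
        - (((u:ℂ)-1)*(∏ k ∈ Finset.Ico 1 c, F k))*hmid
        + ((u:ℂ)-1)*hsplit + hfull
  exact_mod_cast key

lemma V_eq_prod_W (n : ℕ) (hn : 1 ≤ n) : V n = ∏ d ∈ n.divisors, W d := by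
  have hn0 : 0 < n := hn
  unfold V W
  rw [Finset.prod_sigma']
  refine (Finset.prod_bij' (fun p _ => p.2 * (n / p.1))
    (fun k _ => ⟨n / Nat.gcd k n, k / Nat.gcd k n⟩) ?_ ?_ ?_ ?_ ?_).symm
  · -- i maps into target
    rintro ⟨d, j⟩ hp
    simp only [Finset.mem_sigma, Nat.mem_divisors, Finset.mem_filter, Finset.mem_Ico] at hp ⊢
    obtain ⟨⟨hdvd, hn0'⟩, ⟨⟨hj1, hjd⟩, hj2, hjcop⟩⟩ := hp
    have hd0 : 0 < d := Nat.pos_of_dvd_of_pos hdvd hn0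
    have hnd : d * (n / d) = n := Nat.mul_div_cancel' hdvd
    have hnd0 : 0 < n / d := Nat.div_pos (Nat.le_of_dvd hn0 hdvd) hd0
    constructor
    · constructor
      · exact Nat.one_le_iff_ne_zero.mpr (Nat.mul_ne_zero (by omega) (by omega))
      · nlinarith [hnd]
    · nlinarith [hnd]
  · -- j maps into source
    intro k hk
    simp only [Finset.mem_filter, Finset.mem_Ico] at hk
    obtain ⟨⟨hk1, hkn⟩, hk2⟩ := hk
    have hg0 : 0 < Nat.gcd k n := Nat.gcd_pos_of_pos_right _ hn0
    have hgk : Nat.gcd k n ∣ k := Nat.gcd_dvd_left _ _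
    have hgn : Nat.gcd k n ∣ n := Nat.gcd_dvd_right _ _
    simp only [Finset.mem_sigma, Nat.mem_divisors, Finset.mem_filter, Finset.mem_Ico]
    refine ⟨⟨Nat.div_dvd_of_dvd hgn, hn0.ne'⟩, ⟨?_, ?_⟩, ?_, ?_⟩
    · exact Nat.div_pos (Nat.le_of_dvd (by omega) hgk) hg0
    · exact Nat.div_lt_div_of_lt_of_dvd hgn hkn
    · have : 2 * (k / Nat.gcd k n) = (2 * k) / Nat.gcd k n := by
        rw [Nat.mul_div_assoc _ hgk]
      rw [this]
      exact Nat.div_lt_div_of_lt_of_dvd hgn hk2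
    · exact Nat.coprime_div_gcd_div_gcd hg0
  · -- left inverse : j (i p) = p
    rintro ⟨d, j⟩ hp
    simp only [Finset.mem_sigma, Nat.mem_divisors, Finset.mem_filter, Finset.mem_Ico] at hp
    obtain ⟨⟨hdvd, _⟩, ⟨⟨hj1, hjd⟩, hj2, hjcop⟩⟩ := hp
    have hd0 : 0 < d := Nat.pos_of_dvd_of_pos hdvd hn0
    have hnd : d * (n / d) = n := Nat.mul_div_cancel' hdvd
    have hnd0 : 0 < n / d := Nat.div_pos (Nat.le_of_dvd hn0 hdvd) hd0
    have hgcd : Nat.gcd (j * (n / d)) n = n / d := by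
      have e1 : Nat.gcd (j * (n / d)) n = Nat.gcd (j * (n / d)) (d * (n / d)) := by rw [hnd]
      rw [e1, Nat.gcd_mul_right, hjcop, one_mul]
    have h1 : n / Nat.gcd (j * (n / d)) n = d := by
      rw [hgcd, Nat.div_div_self hdvd hn0.ne']
    have h2 : j * (n / d) / Nat.gcd (j * (n / d)) n = j := by
      rw [hgcd, Nat.mul_div_cancel _ hnd0]
    show (⟨n / Nat.gcd (j * (n/d)) n, (j * (n/d)) / Nat.gcd (j * (n/d)) n⟩ : Σ _ : ℕ, ℕ) = ⟨d, j⟩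
    rw [h1, h2]
  · -- right inverse : i (j k) = k
    intro k hk
    simp only [Finset.mem_filter, Finset.mem_Ico] at hk
    obtain ⟨⟨hk1, hkn⟩, hk2⟩ := hk
    have hgk : Nat.gcd k n ∣ k := Nat.gcd_dvd_left _ _
    have hgn : Nat.gcd k n ∣ n := Nat.gcd_dvd_right _ _
    show k / Nat.gcd k n * (n / (n / Nat.gcd k n)) = k
    rw [Nat.div_div_self hgn hn0.ne', Nat.div_mul_cancel hgk]
  · -- factors agree
    rintro ⟨d, j⟩ hp
    simp only [Finset.mem_sigma, Nat.mem_divisors, Finset.mem_filter, Finset.mem_Ico] at hp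
    obtain ⟨⟨hdvd, _⟩, ⟨⟨hj1, hjd⟩, hj2, hjcop⟩⟩ := hp
    have hd0 : 0 < d := Nat.pos_of_dvd_of_pos hdvd hn0
    have hnd : d * (n / d) = n := Nat.mul_div_cancel' hdvd
    have hnr : (n:ℝ) ≠ 0 := Nat.cast_ne_zero.mpr hn0.ne'
    have hdr : (d:ℝ) ≠ 0 := Nat.cast_ne_zero.mpr hd0.ne'
    have key : ((j * (n/d) : ℕ) : ℝ) = (j:ℝ) * (n:ℝ) / (d:ℝ) := by
      rw [eq_div_iff hdr]
      exact_mod_cast congrArg (Nat.cast : ℕ → ℝ)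
        (by rw [mul_assoc, mul_comm (n/d) d, hnd] : j * (n/d) * d = j * n)
    have hratio : (π * ((j * (n / d) : ℕ) : ℝ)) / n = π * j / d := by
      rw [key]; field_simp
    rw [hratio]

lemma map_pV (n : ℕ) (hn : 1 ≤ n) : (pV n).map (Int.castRingHom ℝ) = V n := by
  apply Polynomial.eq_of_infinite_eval_eq
  apply Set.Infinite.mono (s := Set.Ioi (0:ℝ)) ?_ (Set.Ioi_infinite 0)
  intro x hx
  have hx0 : 0 < x := hx
  set t : ℝ := x^2 + 2 with htdef
  have ht2 : 2 < t := by nlinarith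
  have hs4 : 0 < t^2 - 4 := by nlinarith
  set s : ℝ := Real.sqrt (t^2 - 4) with hsdef
  have hs : 0 < s := Real.sqrt_pos.mpr hs4
  have hs2 : s^2 = t^2 - 4 := Real.sq_sqrt hs4.le
  set u : ℝ := (t + s)/2 with hudef
  have hu : 1 < u := by rw [hudef]; nlinarith
  have hmul : u * ((t - s)/2) = 1 := by rw [hudef]; linear_combination (-(1:ℝ)/4)*hs2
  have hui : u⁻¹ = (t - s)/2 := inv_eq_of_mul_eq_one_right hmul
  have htu : u + u⁻¹ = x^2 + 2 := by rw [hui, hudef, htdef]; ring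
  have h1 := V_eval n hn x u hu htu
  have h2 := pV_eval n hn x u hu htu
  have hD : (u ^ ((n+1)/2 - 1) * ((u - 1) * (if n % 2 = 0 then u + 1 else 1))) ≠ 0 := by
    apply ne_of_gt
    apply mul_pos (pow_pos (by linarith) _)
    apply mul_pos (by linarith)
    split <;> linarith
  show Polynomial.eval x ((pV n).map (Int.castRingHom ℝ)) = Polynomial.eval x (V n)
  exact mul_right_cancel₀ hD (h2.trans h1.symm)

/-- For every `n ≥ 1`, the polynomial `W_n` has integer coefficients. -/
theorem W_int_coeffs (n : ℕ) (hn : 1 ≤ n) :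
    ∃ p : Polynomial ℤ, p.map (Int.castRingHom ℝ) = W n := by
  induction n using Nat.strong_induction_on with
  | _ n ih =>
  have hn0 : 0 < n := hn
  have hWmonic : ∀ m : ℕ, (W m).Monic := fun m =>
    monic_prod_of_monic _ _ (fun k _ => monic_X_pow_add_C _ two_ne_zero)
  have hP : ∃ p : Polynomial ℤ, p.map (Int.castRingHom ℝ) = ∏ d ∈ n.divisors.erase n, W d := by
    refine Finset.prod_induction _ (fun f => ∃ p : Polynomial ℤ, p.map (Int.castRingHom ℝ) = f)
      ?_ ⟨1, by simp⟩ ?_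
    · rintro f g ⟨pf, hpf⟩ ⟨pg, hpg⟩
      exact ⟨pf * pg, by rw [Polynomial.map_mul, hpf, hpg]⟩
    · intro d hd
      rw [Finset.mem_erase, Nat.mem_divisors] at hd
      obtain ⟨hne, hdvd, _⟩ := hd
      have hd1 : 1 ≤ d := Nat.pos_of_dvd_of_pos hdvd hn0
      have hdn : d < n := lt_of_le_of_ne (Nat.le_of_dvd hn0 hdvd) hne
      exact ih d hdn hd1
  obtain ⟨P, hP⟩ := hP
  have hPmonicR : (P.map (Int.castRingHom ℝ)).Monic := by
    rw [hP]; exact monic_prod_of_monic _ _ (fun d _ => hWmonic d)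
  have hPm : P.Monic :=
    ((Int.cast_injective (α := ℝ)).monic_map_iff (f := Int.castRingHom ℝ)).mpr hPmonicR
  have hfact : (pV n).map (Int.castRingHom ℝ) = P.map (Int.castRingHom ℝ) * W n := by
    rw [map_pV n hn, V_eq_prod_W n hn, hP,
      ← Finset.mul_prod_erase n.divisors W (Nat.mem_divisors_self n hn0.ne')]
    ring
  refine ⟨(pV n) /ₘ P, ?_⟩
  rw [Polynomial.map_divByMonic _ hPm, hfact,
    Polynomial.mul_divByMonic_cancel_left _ hPmonicR]
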